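/- Let γ > 1. Suppose real numbers V₀, C₀, V₁, C₁ satisfy the Rankine–Hugoniot relations 1+V₁ = ((γ-1)/(γ+1))(1+V₀) + 2C₀²/((γ+1)(1+V₀)) and C₁² = C₀² + ((γ-1)/2)[(1+V₀)² - (1+V₁)²], with 1+V₀ ≠ 0. If C₁ = -(1+V₁), then V₀ = V₁. -/
import Mathlib


theorem stmt_11 (γ V₀ C₀ V₁ C₁ : ℝ) (hγ : 1 < γ) (h0 : 1 + V₀ ≠ 0)
    (rh1 : 1 + V₁ = ((γ - 1) / (γ + 1)) * (1 + V₀) + 2 * C₀ ^ 2 / ((γ + 1) * (1 + V₀)))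
    (rh2 : C₁ ^ 2 = C₀ ^ 2 + ((γ - 1) / 2) * ((1 + V₀) ^ 2 - (1 + V₁) ^ 2))
    (hc : C₁ = -(1 + V₁)) :
    V₀ = V₁ := by
  have hγ1 : γ + 1 ≠ 0 := by nlinarith
  have key : 2 * C₀ ^ 2 = (γ + 1) * (1 + V₀) * (1 + V₁) - (γ - 1) * (1 + V₀) ^ 2 := by
    field_simp at rh1
    nlinarith [rh1]
  subst hc
  have h2 : (γ + 1) * (1 + V₁) * ((1 + V₁) - (1 + V₀)) = 0 := by nlinarith [rh2, key]
  rcases mul_eq_zero.mp h2 with h | h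
  · rcases mul_eq_zero.mp h with h | h
    · exact absurd h hγ1
    · exfalso
      have hC : C₀ ^ 2 = -(γ - 1) * (1 + V₀) ^ 2 / 2 := by nlinarith [key, h]
      nlinarith [sq_nonneg C₀, sq_nonneg (1 + V₀), sq_abs (1 + V₀), abs_pos.mpr h0, pow_pos (abs_pos.mpr h0) 2]
  · linarith
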